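/- For all real numbers a, b and all X ≥ 0, ∫_{−X}^{X} (1 + |t + a|)^{−1/2} (1 + |t + b|)^{−1/2} dt ≤ log(1 + |a| + X) + log(1 + |b| + X). -/

import Mathlib

open MeasureTheory

lemma cont_inv : Continuous fun u : ℝ => (1 + |u|)⁻¹ :=
  (continuous_const.add continuous_abs).inv₀ (fun u => (by positivity : (0:ℝ) < 1 + |u|).ne')

lemma half_int (M : ℝ) (hM : 0 ≤ M) :
    ∫ u in (0:ℝ)..M, (1 + |u|)⁻¹ = Real.log (1 + M) := by
  rw [intervalIntegral.integral_congr (g := fun u => (1 + u)⁻¹)]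
  · have := intervalIntegral.integral_comp_add_left (a := (0:ℝ)) (b := M)
      (fun y : ℝ => y⁻¹) 1
    rw [show (fun u : ℝ => (1 + u)⁻¹) = fun u : ℝ => (1 + u)⁻¹ from rfl]
    calc ∫ u in (0:ℝ)..M, (1 + u)⁻¹ = ∫ x in (1+0:ℝ)..(1+M), x⁻¹ := this
      _ = Real.log ((1 + M) / (1 + 0)) := by
          apply integral_inv
          rw [Set.mem_uIcc]
          push_neg
          constructor <;> intro h <;> nlinarith
      _ = Real.log (1 + M) := by norm_num
  · intro u hu
    rw [Set.uIcc_of_le hM] at hu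
    simp [abs_of_nonneg hu.1]

lemma full_int (M : ℝ) (hM : 0 ≤ M) :
    ∫ u in (-M)..M, (1 + |u|)⁻¹ = 2 * Real.log (1 + M) := by
  have h1 : ∫ u in (-M)..(0:ℝ), (1 + |u|)⁻¹ = ∫ u in (0:ℝ)..M, (1 + |u|)⁻¹ := by
    have := intervalIntegral.integral_comp_neg (a := (0:ℝ)) (b := M)
      (fun u : ℝ => (1 + |u|)⁻¹)
    simp only [abs_neg, neg_zero] at this
    rw [← this]
  have hi : ∀ c d : ℝ, IntervalIntegrable (fun u : ℝ => (1 + |u|)⁻¹) volume c d :=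
    fun c d => cont_inv.intervalIntegrable c d
  rw [← intervalIntegral.integral_add_adjacent_intervals (hi (-M) 0) (hi 0 M), h1,
    half_int M hM]
  ring

lemma L1 (a X : ℝ) (hX : 0 ≤ X) :
    ∫ t in Set.Icc (-X) X, (1 + |t + a|)⁻¹ ≤ 2 * Real.log (1 + |a| + X) := by
  have key : ∫ t in Set.Icc (-X) X, (1 + |t + a|)⁻¹
      = ∫ u in (-X + a)..(X + a), (1 + |u|)⁻¹ := by
    rw [MeasureTheory.integral_Icc_eq_integral_Ioc,
      ← intervalIntegral.integral_of_le (by linarith),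
      intervalIntegral.integral_comp_add_right (fun u : ℝ => (1 + |u|)⁻¹) a]
  rw [key]
  have hM : 0 ≤ |a| + X := by positivity
  have h2 : ∫ u in (-(|a| + X))..(|a| + X), (1 + |u|)⁻¹ = 2 * Real.log (1 + |a| + X) := by
    rw [full_int _ hM]; ring_nf
  rw [← h2]
  apply intervalIntegral.integral_mono_interval (by cases abs_cases a <;> linarith)
    (by linarith) (by cases abs_cases a <;> linarith)
  · filter_upwards with u; positivity
  · exact cont_inv.intervalIntegrable _ _

/-- For all `a, b ∈ ℝ` and `X ≥ 0`,
`∫_{−X}^{X} (1 + |t + a|)^{−1/2} (1 + |t + b|)^{−1/2} dt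
  ≤ log(1 + |a| + X) + log(1 + |b| + X)`. -/
theorem statement6 (a b X : ℝ) (hX : 0 ≤ X) :
    ∫ t in Set.Icc (-X) X,
        (1 + |t + a|) ^ (-(1 : ℝ) / 2) * (1 + |t + b|) ^ (-(1 : ℝ) / 2)
      ≤ Real.log (1 + |a| + X) + Real.log (1 + |b| + X) := by
  have sq_eq : ∀ x : ℝ, 0 < x → (x ^ (-(1:ℝ)/2)) ^ 2 = x⁻¹ := by
    intro x hx
    rw [← Real.rpow_natCast (x ^ (-(1:ℝ)/2)) 2, ← Real.rpow_mul hx.le]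
    norm_num [Real.rpow_neg_one]
  have contf : ∀ c : ℝ, Continuous fun t : ℝ => (1 + |t + c|) ^ (-(1:ℝ)/2) := by
    intro c
    apply Continuous.rpow_const
    · exact continuous_const.add ((continuous_id.add continuous_const).abs)
    · intro t; left; positivity
  have conti : ∀ c : ℝ, Continuous fun t : ℝ => (1 + |t + c|)⁻¹ := by
    intro c
    exact (continuous_const.add ((continuous_id.add continuous_const).abs)).inv₀
      fun t => (by positivity : (0:ℝ) < 1 + |t + c|).ne'
  have hintf : IntegrableOn
      (fun t => (1 + |t + a|) ^ (-(1:ℝ)/2) * (1 + |t + b|) ^ (-(1:ℝ)/2))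
      (Set.Icc (-X) X) volume :=
    ((contf a).mul (contf b)).integrableOn_Icc
  have hinta : IntegrableOn (fun t => (1 + |t + a|)⁻¹) (Set.Icc (-X) X) volume :=
    (conti a).integrableOn_Icc
  have hintb : IntegrableOn (fun t => (1 + |t + b|)⁻¹) (Set.Icc (-X) X) volume :=
    (conti b).integrableOn_Icc
  have step1 : ∫ t in Set.Icc (-X) X,
        (1 + |t + a|) ^ (-(1:ℝ)/2) * (1 + |t + b|) ^ (-(1:ℝ)/2)
      ≤ ∫ t in Set.Icc (-X) X, ((1 + |t + a|)⁻¹ + (1 + |t + b|)⁻¹) / 2 := by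
    apply MeasureTheory.setIntegral_mono_on hintf
      ((hinta.add hintb).div_const 2) measurableSet_Icc
    intro t _
    have ha : (0:ℝ) < 1 + |t + a| := by positivity
    have hb : (0:ℝ) < 1 + |t + b| := by positivity
    have h1 := sq_eq _ ha
    have h2 := sq_eq _ hb
    simp only [Pi.add_apply]
    nlinarith [sq_nonneg ((1 + |t + a|) ^ (-(1:ℝ)/2) - (1 + |t + b|) ^ (-(1:ℝ)/2))]
  have step2 : ∫ t in Set.Icc (-X) X, ((1 + |t + a|)⁻¹ + (1 + |t + b|)⁻¹) / 2
      = ((∫ t in Set.Icc (-X) X, (1 + |t + a|)⁻¹)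
        + ∫ t in Set.Icc (-X) X, (1 + |t + b|)⁻¹) / 2 := by
    rw [← MeasureTheory.integral_add hinta hintb, ← integral_div]
  have hA := L1 a X hX
  have hB := L1 b X hX
  calc _ ≤ _ := step1
    _ = _ := step2
    _ ≤ (2 * Real.log (1 + |a| + X) + 2 * Real.log (1 + |b| + X)) / 2 := by
        linarith
    _ = Real.log (1 + |a| + X) + Real.log (1 + |b| + X) := by ring
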